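/- The border rank of the matrix multiplication tensor M_{⟨3,2,2⟩} ∈ ℂ^6⊗ℂ^4⊗ℂ^6 is at most 10. -/

import Mathlib

/-- A simple (rank-one) tensor in coordinates: `(u ⊗ v ⊗ w)_{ijk} = u_i v_j w_k`. -/
def simpleTensor {ι₁ ι₂ ι₃ : Type} (u : ι₁ → ℂ) (v : ι₂ → ℂ) (w : ι₃ → ℂ) :
    ι₁ → ι₂ → ι₃ → ℂ :=
  fun i j k => u i * v j * w k

/-- The set of tensors of rank at most `r`: sums of `r` simple tensors. -/
def rankAtMost (ι₁ ι₂ ι₃ : Type) (r : ℕ) : Set (ι₁ → ι₂ → ι₃ → ℂ) :=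
  {T | ∃ u : Fin r → ι₁ → ℂ, ∃ v : Fin r → ι₂ → ℂ, ∃ w : Fin r → ι₃ → ℂ,
    T = ∑ s : Fin r, simpleTensor (u s) (v s) (w s)}

/-- The border rank of a tensor: the least `r` such that `T` lies in the closure of the
set of tensors of rank at most `r`. -/
noncomputable def borderRank {ι₁ ι₂ ι₃ : Type} (T : ι₁ → ι₂ → ι₃ → ℂ) : ℕ :=
  sInf {r : ℕ | T ∈ closure (rankAtMost ι₁ ι₂ ι₃ r)}

/-- The matrix multiplication tensor `M_{⟨n,m,p⟩} = ∑ x^i_j ⊗ y^j_k ⊗ z^k_i`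
in coordinates: the first factor is indexed by pairs `(i,j)`, the second by `(j,k)`,
the third by `(k,i)`. -/
def matMulTensor (n m p : ℕ) :
    (Fin n × Fin m) → (Fin m × Fin p) → (Fin p × Fin n) → ℂ :=
  fun x y z => if x.2 = y.1 ∧ y.2 = z.1 ∧ z.2 = x.1 then 1 else 0

/-- The BCLRS tensor `T_{BCLRS,m} = M_{⟨m,2,2⟩} − x^1_1 ⊗ (y^1_1 ⊗ z^1_1 + y^1_2 ⊗ z^2_1)`
(indices written 1-based in the literature, 0-based here). -/
def TBCLRS (m : ℕ) : (Fin m × Fin 2) → (Fin 2 × Fin 2) → (Fin 2 × Fin m) → ℂ :=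
  fun x y z =>
    matMulTensor m 2 2 x y z -
      (if x.1.val = 0 ∧ x.2.val = 0 then 1 else 0) *
        ((if y.1.val = 0 ∧ y.2.val = 0 then 1 else 0) *
            (if z.1.val = 0 ∧ z.2.val = 0 then 1 else 0) +
          (if y.1.val = 0 ∧ y.2.val = 1 then 1 else 0) *
            (if z.1.val = 1 ∧ z.2.val = 0 then 1 else 0))

/-- The border rank of `M_{⟨3,2,2⟩} ∈ ℂ^6 ⊗ ℂ^4 ⊗ ℂ^6` is at most `10`. -/
noncomputable def uu : Fin 10 → ℂ → (Fin 3 × Fin 2) → ℂ :=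
  ![
    fun e x => ((if x.1.val = 0 ∧ x.2.val = 1 then (1:ℂ) else 0)) + e * ((if x.1.val = 1 ∧ x.2.val = 1 then (1:ℂ) else 0)),
    fun e x => ((if x.1.val = 1 ∧ x.2.val = 0 then (-1:ℂ) else 0)) + e * ((if x.1.val = 1 ∧ x.2.val = 1 then (1:ℂ) else 0)),
    fun e x => ((if x.1.val = 0 ∧ x.2.val = 1 then (-1:ℂ) else 0)) + e * (0),
    fun e x => ((if x.1.val = 0 ∧ x.2.val = 1 then (1:ℂ) else 0) + (if x.1.val = 1 ∧ x.2.val = 0 then (1:ℂ) else 0)) + e * (0),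
    fun e x => ((if x.1.val = 1 ∧ x.2.val = 0 then (1:ℂ) else 0)) + e * (0),
    fun e x => ((if x.1.val = 0 ∧ x.2.val = 0 then (1:ℂ) else 0)) + e * ((if x.1.val = 2 ∧ x.2.val = 0 then (1:ℂ) else 0)),
    fun e x => ((if x.1.val = 2 ∧ x.2.val = 1 then (-1:ℂ) else 0)) + e * ((if x.1.val = 2 ∧ x.2.val = 0 then (1:ℂ) else 0)),
    fun e x => ((if x.1.val = 0 ∧ x.2.val = 0 then (-1:ℂ) else 0)) + e * (0),
    fun e x => ((if x.1.val = 0 ∧ x.2.val = 0 then (1:ℂ) else 0) + (if x.1.val = 2 ∧ x.2.val = 1 then (1:ℂ) else 0)) + e * (0),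
    fun e x => ((if x.1.val = 2 ∧ x.2.val = 1 then (1:ℂ) else 0)) + e * (0)]

noncomputable def vv : Fin 10 → ℂ → (Fin 2 × Fin 2) → ℂ :=
  ![
    fun e x => ((if x.1.val = 1 ∧ x.2.val = 1 then (1:ℂ) else 0)) + e * (0),
    fun e x => ((if x.1.val = 1 ∧ x.2.val = 0 then (1:ℂ) else 0)) + e * (0),
    fun e x => ((if x.1.val = 1 ∧ x.2.val = 0 then (1:ℂ) else 0) + (if x.1.val = 1 ∧ x.2.val = 1 then (1:ℂ) else 0)) + e * ((if x.1.val = 0 ∧ x.2.val = 0 then (1:ℂ) else 0) + (if x.1.val = 0 ∧ x.2.val = 1 then (1:ℂ) else 0)),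
    fun e x => ((if x.1.val = 1 ∧ x.2.val = 0 then (1:ℂ) else 0)) + e * ((if x.1.val = 0 ∧ x.2.val = 0 then (1:ℂ) else 0) + (if x.1.val = 0 ∧ x.2.val = 1 then (1:ℂ) else 0)),
    fun e x => ((if x.1.val = 1 ∧ x.2.val = 0 then (1:ℂ) else 0)) + e * ((if x.1.val = 0 ∧ x.2.val = 0 then (1:ℂ) else 0)),
    fun e x => ((if x.1.val = 0 ∧ x.2.val = 1 then (1:ℂ) else 0)) + e * (0),
    fun e x => ((if x.1.val = 0 ∧ x.2.val = 0 then (1:ℂ) else 0)) + e * (0),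
    fun e x => ((if x.1.val = 0 ∧ x.2.val = 0 then (1:ℂ) else 0) + (if x.1.val = 0 ∧ x.2.val = 1 then (1:ℂ) else 0)) + e * ((if x.1.val = 1 ∧ x.2.val = 0 then (1:ℂ) else 0) + (if x.1.val = 1 ∧ x.2.val = 1 then (1:ℂ) else 0)),
    fun e x => ((if x.1.val = 0 ∧ x.2.val = 0 then (1:ℂ) else 0)) + e * ((if x.1.val = 1 ∧ x.2.val = 0 then (1:ℂ) else 0) + (if x.1.val = 1 ∧ x.2.val = 1 then (1:ℂ) else 0)),
    fun e x => ((if x.1.val = 0 ∧ x.2.val = 0 then (1:ℂ) else 0)) + e * ((if x.1.val = 1 ∧ x.2.val = 0 then (1:ℂ) else 0))]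

noncomputable def ww : Fin 10 → ℂ → (Fin 2 × Fin 3) → ℂ :=
  ![
    fun e x => ((if x.1.val = 1 ∧ x.2.val = 1 then (1:ℂ) else 0)) + e * ((if x.1.val = 1 ∧ x.2.val = 0 then (1:ℂ) else 0)),
    fun e x => ((if x.1.val = 0 ∧ x.2.val = 1 then (1:ℂ) else 0)) + e * ((if x.1.val = 0 ∧ x.2.val = 0 then (1:ℂ) else 0)),
    fun e x => ((if x.1.val = 1 ∧ x.2.val = 1 then (1:ℂ) else 0)) + e * (0),
    fun e x => ((if x.1.val = 1 ∧ x.2.val = 1 then (1:ℂ) else 0)) + e * ((if x.1.val = 0 ∧ x.2.val = 0 then (1:ℂ) else 0)),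
    fun e x => ((if x.1.val = 0 ∧ x.2.val = 1 then (1:ℂ) else 0) + (if x.1.val = 1 ∧ x.2.val = 1 then (-1:ℂ) else 0)) + e * (0),
    fun e x => ((if x.1.val = 1 ∧ x.2.val = 2 then (1:ℂ) else 0)) + e * ((if x.1.val = 1 ∧ x.2.val = 0 then (1:ℂ) else 0)),
    fun e x => ((if x.1.val = 0 ∧ x.2.val = 2 then (1:ℂ) else 0)) + e * ((if x.1.val = 0 ∧ x.2.val = 0 then (1:ℂ) else 0)),
    fun e x => ((if x.1.val = 1 ∧ x.2.val = 2 then (1:ℂ) else 0)) + e * (0),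
    fun e x => ((if x.1.val = 1 ∧ x.2.val = 2 then (1:ℂ) else 0)) + e * ((if x.1.val = 0 ∧ x.2.val = 0 then (1:ℂ) else 0)),
    fun e x => ((if x.1.val = 0 ∧ x.2.val = 2 then (1:ℂ) else 0) + (if x.1.val = 1 ∧ x.2.val = 2 then (-1:ℂ) else 0)) + e * (0)]

def E2 : (Fin 3 × Fin 2) → (Fin 2 × Fin 2) → (Fin 2 × Fin 3) → ℂ :=
  fun a b c =>
    (if a.1.val = 0 ∧ a.2.val = 0 ∧ b.1.val = 1 ∧ b.2.val = 0 ∧ c.1.val = 0 ∧ c.2.val = 0 then (1:ℂ) else 0) +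
    (if a.1.val = 0 ∧ a.2.val = 0 ∧ b.1.val = 1 ∧ b.2.val = 1 ∧ c.1.val = 0 ∧ c.2.val = 0 then (1:ℂ) else 0) +
    (if a.1.val = 0 ∧ a.2.val = 1 ∧ b.1.val = 0 ∧ b.2.val = 0 ∧ c.1.val = 0 ∧ c.2.val = 0 then (1:ℂ) else 0) +
    (if a.1.val = 0 ∧ a.2.val = 1 ∧ b.1.val = 0 ∧ b.2.val = 1 ∧ c.1.val = 0 ∧ c.2.val = 0 then (1:ℂ) else 0) +
    (if a.1.val = 1 ∧ a.2.val = 0 ∧ b.1.val = 0 ∧ b.2.val = 0 ∧ c.1.val = 0 ∧ c.2.val = 0 then (1:ℂ) else 0) +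
    (if a.1.val = 1 ∧ a.2.val = 0 ∧ b.1.val = 0 ∧ b.2.val = 1 ∧ c.1.val = 0 ∧ c.2.val = 0 then (1:ℂ) else 0) +
    (if a.1.val = 1 ∧ a.2.val = 1 ∧ b.1.val = 1 ∧ b.2.val = 0 ∧ c.1.val = 0 ∧ c.2.val = 0 then (1:ℂ) else 0) +
    (if a.1.val = 1 ∧ a.2.val = 1 ∧ b.1.val = 1 ∧ b.2.val = 1 ∧ c.1.val = 1 ∧ c.2.val = 0 then (1:ℂ) else 0) +
    (if a.1.val = 2 ∧ a.2.val = 0 ∧ b.1.val = 0 ∧ b.2.val = 0 ∧ c.1.val = 0 ∧ c.2.val = 0 then (1:ℂ) else 0) +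
    (if a.1.val = 2 ∧ a.2.val = 0 ∧ b.1.val = 0 ∧ b.2.val = 1 ∧ c.1.val = 1 ∧ c.2.val = 0 then (1:ℂ) else 0) +
    (if a.1.val = 2 ∧ a.2.val = 1 ∧ b.1.val = 1 ∧ b.2.val = 0 ∧ c.1.val = 0 ∧ c.2.val = 0 then (1:ℂ) else 0) +
    (if a.1.val = 2 ∧ a.2.val = 1 ∧ b.1.val = 1 ∧ b.2.val = 1 ∧ c.1.val = 0 ∧ c.2.val = 0 then (1:ℂ) else 0)
set_option maxHeartbeats 12000000 in
lemma key_identity (e : ℂ) (a : Fin 3 × Fin 2) (b : Fin 2 × Fin 2) (c : Fin 2 × Fin 3) :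
    (∑ s : Fin 10, uu s e a * vv s e b * ww s e c)
      = e * matMulTensor 3 2 2 a b c + e ^ 2 * E2 a b c := by
  obtain ⟨a1, a2⟩ := a
  obtain ⟨b1, b2⟩ := b
  obtain ⟨c1, c2⟩ := c
  fin_cases a1 <;> fin_cases a2 <;> fin_cases b1 <;> fin_cases b2 <;> fin_cases c1 <;>
    fin_cases c2 <;>
    · simp (config := { decide := true }) [uu, vv, ww, E2, matMulTensor, Fin.sum_univ_succ]
      try ring

lemma G_mem (e : ℂ) (he : e ≠ 0) :
    (fun a b c => matMulTensor 3 2 2 a b c + e * E2 a b c) ∈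
      rankAtMost (Fin 3 × Fin 2) (Fin 2 × Fin 2) (Fin 2 × Fin 3) 10 := by
  refine ⟨fun s x => e⁻¹ * uu s e x, fun s y => vv s e y, fun s z => ww s e z, ?_⟩
  funext a b c
  have h1 : (∑ s : Fin 10,
      simpleTensor (fun x => e⁻¹ * uu s e x) (fun y => vv s e y) (fun z => ww s e z)) a b c
      = ∑ s : Fin 10, e⁻¹ * (uu s e a * vv s e b * ww s e c) := by
    simp only [Finset.sum_apply, simpleTensor]
    exact Finset.sum_congr rfl (fun s _ => by ring)
  have h2 : (∑ s : Fin 10, e⁻¹ * (uu s e a * vv s e b * ww s e c))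
      = e⁻¹ * ∑ s : Fin 10, uu s e a * vv s e b * ww s e c := by
    rw [Finset.mul_sum]
  rw [h1, h2, key_identity]
  field_simp

theorem borderRank_matMul322_le_ten : borderRank (matMulTensor 3 2 2) ≤ 10 := by
  have hmem : matMulTensor 3 2 2 ∈
      closure (rankAtMost (Fin 3 × Fin 2) (Fin 2 × Fin 2) (Fin 2 × Fin 3) 10) := by
    have hG : Continuous (fun e : ℂ =>
        (fun a b c => matMulTensor 3 2 2 a b c + e * E2 a b c :
          (Fin 3 × Fin 2) → (Fin 2 × Fin 2) → (Fin 2 × Fin 3) → ℂ)) := by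
      apply continuous_pi; intro a
      apply continuous_pi; intro b
      apply continuous_pi; intro c
      fun_prop
    have h0 : (fun a b c => matMulTensor 3 2 2 a b c + (0 : ℂ) * E2 a b c) =
        matMulTensor 3 2 2 := by
      funext a b c; simp
    have htend : Filter.Tendsto (fun e : ℂ =>
        (fun a b c => matMulTensor 3 2 2 a b c + e * E2 a b c :
          (Fin 3 × Fin 2) → (Fin 2 × Fin 2) → (Fin 2 × Fin 3) → ℂ))
        (nhdsWithin 0 {(0 : ℂ)}ᶜ) (nhds (matMulTensor 3 2 2)) := by
      have h1 : Filter.Tendsto (fun e : ℂ =>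
          (fun a b c => matMulTensor 3 2 2 a b c + e * E2 a b c :
            (Fin 3 × Fin 2) → (Fin 2 × Fin 2) → (Fin 2 × Fin 3) → ℂ)) (nhds 0)
          (nhds (fun a b c => matMulTensor 3 2 2 a b c + (0 : ℂ) * E2 a b c)) :=
        hG.tendsto 0
      rw [h0] at h1
      exact h1.mono_left (nhdsWithin_le_nhds : nhdsWithin (0 : ℂ) {(0 : ℂ)}ᶜ ≤ nhds 0)
    haveI : Filter.NeBot (nhdsWithin (0 : ℂ) {(0 : ℂ)}ᶜ) :=
      NormedField.nhdsNE_neBot (0 : ℂ)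
    refine mem_closure_of_tendsto htend ?_
    filter_upwards [self_mem_nhdsWithin] with e he
    exact G_mem e (by simpa using he)
  exact Nat.sInf_le hmem
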